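/- Let a, b : ℝ with 0 < a and 0 < b, and let y : ℝ with 0 < y and y < 1. Then a · Real.log y + b · Real.log (1 − y) ≤ a · Real.log (a / (a + b)) + b · Real.log (b / (a + b)), with equality if and only if y = a / (a + b). -/

import Mathlib

/-- Pointwise form of Proposition 1 of Goodfellow et al.'s GAN paper: for fixed
positive weights `a` and `b`, the function `y ↦ a·log y + b·log (1 - y)` on
`(0, 1)` is uniquely maximized at `y = a / (a + b)`. -/
theorem gan_optimal_discriminator_pointwise
    (a b : ℝ) (ha : 0 < a) (hb : 0 < b)
    (y : ℝ) (hy0 : 0 < y) (hy1 : y < 1) :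
    a * Real.log y + b * Real.log (1 - y)
        ≤ a * Real.log (a / (a + b)) + b * Real.log (b / (a + b))
      ∧ (a * Real.log y + b * Real.log (1 - y)
          = a * Real.log (a / (a + b)) + b * Real.log (b / (a + b))
        ↔ y = a / (a + b)) := by
  have hs : 0 < a + b := by linarith
  have h1y : 0 < 1 - y := by linarith
  set u : ℝ := y * (a + b) / a with hu_def
  set v : ℝ := (1 - y) * (a + b) / b with hv_def
  have hu : 0 < u := by positivity
  have hv : 0 < v := by positivity
  have hsum : a * u + b * v = a + b := by
    rw [hu_def, hv_def, mul_div_assoc', mul_div_assoc', mul_div_cancel_left₀ _ ha.ne', mul_div_cancel_left₀ _ hb.ne']; ring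
  -- key identity: LHS - RHS = a * log u + b * log v
  have hlogu : Real.log u = Real.log y + Real.log (a + b) - Real.log a := by
    rw [hu_def, Real.log_div (by positivity) ha.ne', Real.log_mul hy0.ne' hs.ne']
  have hlogv : Real.log v = Real.log (1 - y) + Real.log (a + b) - Real.log b := by
    rw [hv_def, Real.log_div (by positivity) hb.ne', Real.log_mul h1y.ne' hs.ne']
  have hra : Real.log (a / (a + b)) = Real.log a - Real.log (a + b) :=
    Real.log_div ha.ne' hs.ne'
  have hrb : Real.log (b / (a + b)) = Real.log b - Real.log (a + b) :=
    Real.log_div hb.ne' hs.ne'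
  have hkey : a * Real.log y + b * Real.log (1 - y)
      - (a * Real.log (a / (a + b)) + b * Real.log (b / (a + b)))
      = a * Real.log u + b * Real.log v := by
    rw [hlogu, hlogv, hra, hrb]; ring
  have hle_u : Real.log u ≤ u - 1 := Real.log_le_sub_one_of_pos hu
  have hle_v : Real.log v ≤ v - 1 := Real.log_le_sub_one_of_pos hv
  have hineq : a * Real.log u + b * Real.log v ≤ 0 := by nlinarith
  constructor
  · linarith [hkey ▸ hineq]
  constructor
  · intro heq
    have h0 : a * Real.log u + b * Real.log v = 0 := by
      rw [← hkey]; linarith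
    have hu1 : u = 1 := by
      by_contra h
      have := Real.log_lt_sub_one_of_pos hu h
      nlinarith
    rw [hu_def, div_eq_one_iff_eq ha.ne'] at hu1
    field_simp
    linarith [hu1]
  · intro hy
    rw [hy, show (1:ℝ) - a / (a + b) = b / (a + b) by field_simp; ring]
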